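/- For every integer n ≥ 1, there is at most one 2D filter supported inside ([1−n, n] ∩ ℤ)² that has order 2n sum rules with respect to M_{√2} and order 2n linear-phase moments with phase (1/2, 1/2); that is, if a and a′ are two 2D filters both supported inside ([1−n,n] ∩ ℤ)² with these two properties, then a = a′. -/

import Mathlib

open Complex Real

/-- Fourier series of a finitely supported 2D filter. -/
noncomputable def fhat2 (a : ℤ × ℤ → ℂ) (ω : ℝ × ℝ) : ℂ :=
  ∑ᶠ k : ℤ × ℤ, a k * Complex.exp (-(Complex.I) * ((k.1 : ℂ) * (ω.1 : ℂ) + (k.2 : ℂ) * (ω.2 : ℂ)))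

/-- Order `m` sum rules with respect to the quincunx matrix `M_{√2}`. -/
def SumRules2D (a : ℤ × ℤ → ℂ) (m : ℕ) : Prop :=
  fhat2 a (0, 0) = 1 ∧ ∀ μ : ℕ × ℕ, μ.1 + μ.2 < m →
    ∑ᶠ k : ℤ × ℤ, ((-1 : ℂ) ^ (k.1 + k.2) * a k * (k.1 : ℂ) ^ μ.1 * (k.2 : ℂ) ^ μ.2) = 0

/-- Order `n` linear-phase moments with phase `c ∈ ℝ²`. -/
def LPM2D (a : ℤ × ℤ → ℂ) (n : ℕ) (c : ℝ × ℝ) : Prop :=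
  ∀ μ : ℕ × ℕ, μ.1 + μ.2 < n →
    ∑ᶠ k : ℤ × ℤ, a k * (k.1 : ℂ) ^ μ.1 * (k.2 : ℂ) ^ μ.2
      = ((c.1 : ℂ)) ^ μ.1 * ((c.2 : ℂ)) ^ μ.2

namespace Stmt3Aux

open MvPolynomial

def uu (k : ℤ × ℤ) : ℤ := k.1 + k.2 - 1
def vv (k : ℤ × ℤ) : ℤ := k.1 - k.2

noncomputable def Box (N : ℕ) : Finset (ℤ × ℤ) := Finset.Icc (1 - (N:ℤ), 1 - (N:ℤ)) ((N:ℤ), (N:ℤ))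

lemma mem_Box {N : ℕ} {k : ℤ × ℤ} :
    k ∈ Box N ↔ (uu k).natAbs + (vv k).natAbs + 1 ≤ 2 * N := by
  simp only [Box, Finset.mem_Icc, Prod.le_def, uu, vv]
  omega

lemma Box_mono {N : ℕ} : Box N ⊆ Box (N+1) := by
  intro k hk; rw [mem_Box] at *; omega

def lineSet (z : ℤ) : Finset ℤ :=
  (Finset.range z.natAbs).image (fun i : ℕ => z - (if 0 ≤ z then 1 else -1) * 2 * ((i:ℤ) + 1))

lemma card_lineSet (z : ℤ) : (lineSet z).card ≤ z.natAbs :=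
  le_trans Finset.card_image_le (by simp)

lemma ne_of_mem_lineSet {z c : ℤ} (h : c ∈ lineSet z) : c ≠ z := by
  simp only [lineSet, Finset.mem_image, Finset.mem_range] at h
  obtain ⟨i, hi, rfl⟩ := h; split <;> omega

lemma mem_lineSet {z w : ℤ} (hne : w ≠ z) (hle : w.natAbs ≤ z.natAbs)
    (hpar : (w - z) % 2 = 0) : w ∈ lineSet z := by
  simp only [lineSet, Finset.mem_image, Finset.mem_range]
  refine ⟨(((if 0 ≤ z then 1 else -1) * (z - w))/2 - 1).toNat, ?_, ?_⟩ <;> split <;> omega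

/-- the evaluation point -/
noncomputable def φ (k : ℤ × ℤ) : Fin 2 → ℂ := fun j => if j = 0 then (k.1:ℂ) else (k.2:ℂ)

lemma mom_poly {T : Finset (ℤ×ℤ)} {f : ℤ×ℤ → ℂ} {D : ℕ}
    (hm : ∀ i j : ℕ, i + j < D → ∑ k ∈ T, f k * (k.1:ℂ)^i * (k.2:ℂ)^j = 0)
    (P : MvPolynomial (Fin 2) ℂ) (hP : P.totalDegree < D) :
    ∑ k ∈ T, f k * MvPolynomial.eval (φ k) P = 0 := by
  have heval : ∀ k : ℤ×ℤ, MvPolynomial.eval (φ k) P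
      = ∑ d ∈ P.support, MvPolynomial.coeff d P * ((k.1:ℂ)^(d 0) * (k.2:ℂ)^(d 1)) := by
    intro k
    rw [MvPolynomial.eval_eq']
    refine Finset.sum_congr rfl fun d _ => ?_
    rw [Fin.prod_univ_two]
    simp [φ]
  calc ∑ k ∈ T, f k * MvPolynomial.eval (φ k) P
      = ∑ k ∈ T, ∑ d ∈ P.support,
          MvPolynomial.coeff d P * (f k * (k.1:ℂ)^(d 0) * (k.2:ℂ)^(d 1)) := by
        refine Finset.sum_congr rfl fun k _ => ?_
        rw [heval, Finset.mul_sum]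
        refine Finset.sum_congr rfl fun d _ => by ring
    _ = ∑ d ∈ P.support, MvPolynomial.coeff d P *
          ∑ k ∈ T, f k * (k.1:ℂ)^(d 0) * (k.2:ℂ)^(d 1) := by
        rw [Finset.sum_comm]
        exact Finset.sum_congr rfl fun d _ => (Finset.mul_sum _ _ _).symm
    _ = 0 := by
        refine Finset.sum_eq_zero fun d hd => ?_
        rw [hm (d 0) (d 1) ?_, mul_zero]
        have h1 : (d.sum fun _ e => e) ≤ P.totalDegree := MvPolynomial.le_totalDegree hd
        have h2 : (d.sum fun _ e => e) = d 0 + d 1 := by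
          rw [Finsupp.sum_fintype _ _ (fun _ => rfl), Fin.sum_univ_two]
        omega

noncomputable def Qpoly (p : ℤ × ℤ) : MvPolynomial (Fin 2) ℂ :=
  (∏ c ∈ lineSet (uu p), (X 0 + X 1 - C (1 + (c:ℂ)))) *
  (∏ d ∈ lineSet (vv p), (X 0 - X 1 - C (d:ℂ)))

lemma td_Qpoly (p : ℤ × ℤ) :
    (Qpoly p).totalDegree ≤ (uu p).natAbs + (vv p).natAbs := by
  have h1 : ∀ c : ℂ, (X 0 + X 1 - C (1 + c) : MvPolynomial (Fin 2) ℂ).totalDegree ≤ 1 := by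
    intro c
    refine (totalDegree_sub_C_le _ _).trans ?_
    refine (totalDegree_add _ _).trans ?_
    simp [totalDegree_X]
  have h2 : ∀ d : ℂ, (X 0 - X 1 - C d : MvPolynomial (Fin 2) ℂ).totalDegree ≤ 1 := by
    intro d
    refine (totalDegree_sub_C_le _ _).trans ?_
    refine (totalDegree_sub _ _).trans ?_
    simp [totalDegree_X]
  refine (totalDegree_mul _ _).trans ?_
  have g1 : (∏ c ∈ lineSet (uu p), (X 0 + X 1 - C (1 + (c:ℂ)) : MvPolynomial (Fin 2) ℂ)).totalDegree
      ≤ (uu p).natAbs := by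
    refine (totalDegree_finset_prod _ _).trans ?_
    calc ∑ c ∈ lineSet (uu p), (X 0 + X 1 - C (1 + (c:ℂ)) : MvPolynomial (Fin 2) ℂ).totalDegree
        ≤ ∑ _c ∈ lineSet (uu p), 1 := Finset.sum_le_sum (fun c _ => h1 c)
      _ = (lineSet (uu p)).card := by simp
      _ ≤ _ := card_lineSet _
  have g2 : (∏ d ∈ lineSet (vv p), (X 0 - X 1 - C (d:ℂ) : MvPolynomial (Fin 2) ℂ)).totalDegree
      ≤ (vv p).natAbs := by
    refine (totalDegree_finset_prod _ _).trans ?_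
    calc ∑ d ∈ lineSet (vv p), (X 0 - X 1 - C (d:ℂ) : MvPolynomial (Fin 2) ℂ).totalDegree
        ≤ ∑ _d ∈ lineSet (vv p), 1 := Finset.sum_le_sum (fun d _ => h2 d)
      _ = (lineSet (vv p)).card := by simp
      _ ≤ _ := card_lineSet _
  omega

lemma eval_Qpoly (p k : ℤ × ℤ) :
    MvPolynomial.eval (φ k) (Qpoly p) =
      (∏ c ∈ lineSet (uu p), ((uu k : ℂ) - c)) *
      (∏ d ∈ lineSet (vv p), ((vv k : ℂ) - d)) := by
  simp only [Qpoly, map_mul, map_prod, map_sub, map_add, eval_X, eval_C, φ, uu, vv]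
  push_cast
  congr 1
  exact Finset.prod_congr rfl fun c _ => by ring

lemma uv_inj {k p : ℤ × ℤ} (h1 : uu k = uu p) (h2 : vv k = vv p) : k = p := by
  have : k.1 = p.1 ∧ k.2 = p.2 := by simp only [uu, vv] at h1 h2; omega
  exact Prod.ext this.1 this.2

lemma uv_parity (k p : ℤ × ℤ) : (vv k - vv p) % 2 = (uu k - uu p) % 2 := by
  unfold uu vv; omega

lemma core : ∀ (N : ℕ) (f : ℤ×ℤ → ℂ) (e : ℤ),
    (∀ k, f k ≠ 0 → (uu k).natAbs + (vv k).natAbs + 1 ≤ 2*N ∧ (uu k - e) % 2 = 0) →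
    (∀ i j : ℕ, i + j < 2*N → ∑ k ∈ Box N, f k * (k.1:ℂ)^i * (k.2:ℂ)^j = 0) →
    f = 0 := by
  intro N
  induction N with
  | zero =>
    intro f e hs _
    funext k
    by_contra h
    have := (hs k h).1
    omega
  | succ N ih =>
    intro f e hs hm
    -- Step 1: boundary points vanish
    have hb : ∀ p, (uu p).natAbs + (vv p).natAbs + 1 = 2*(N+1) → f p = 0 := by
      intro p hbd
      by_contra hfp
      have hQ0 : ∑ k ∈ Box (N+1), f k * MvPolynomial.eval (φ k) (Qpoly p) = 0 := by
        refine mom_poly hm (Qpoly p) ?_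
        have := td_Qpoly p
        omega
      have hsingle : ∑ k ∈ Box (N+1), f k * MvPolynomial.eval (φ k) (Qpoly p)
          = f p * MvPolynomial.eval (φ p) (Qpoly p) := by
        refine Finset.sum_eq_single p ?_ ?_
        · intro k hk hkp
          by_cases hfk : f k = 0
          · rw [hfk, zero_mul]
          obtain ⟨hk1, hk2⟩ := hs k hfk
          obtain ⟨hp1, hp2⟩ := hs p hfp
          have hupar : (uu k - uu p) % 2 = 0 := by omega
          have hvpar : (vv k - vv p) % 2 = 0 := by rw [uv_parity]; exact hupar
          rw [eval_Qpoly]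
          -- case analysis
          by_cases hcu : uu k = uu p
          · -- then vv k ≠ vv p, |vv k| ≤ |vv p|
            have hvne : vv k ≠ vv p := fun h => hkp (uv_inj hcu h)
            have hvle : (vv k).natAbs ≤ (vv p).natAbs := by omega
            have hz : (∏ d ∈ lineSet (vv p), ((vv k:ℂ) - (d:ℂ))) = 0 :=
              Finset.prod_eq_zero (mem_lineSet hvne hvle hvpar) (sub_self _)
            rw [hz, mul_zero, mul_zero]
          · by_cases hle : (uu k).natAbs ≤ (uu p).natAbs
            · have hz : (∏ c ∈ lineSet (uu p), ((uu k:ℂ) - (c:ℂ))) = 0 :=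
                Finset.prod_eq_zero (mem_lineSet hcu hle hupar) (sub_self _)
              rw [hz, zero_mul, mul_zero]
            · have hvne : vv k ≠ vv p := by
                intro h
                have : (vv k).natAbs = (vv p).natAbs := by rw [h]
                omega
              have hvle : (vv k).natAbs ≤ (vv p).natAbs := by omega
              have hz : (∏ d ∈ lineSet (vv p), ((vv k:ℂ) - (d:ℂ))) = 0 :=
                Finset.prod_eq_zero (mem_lineSet hvne hvle hvpar) (sub_self _)
              rw [hz, mul_zero, mul_zero]
        · intro hp
          exact absurd (mem_Box.mpr (by omega)) hp
      have hne : MvPolynomial.eval (φ p) (Qpoly p) ≠ 0 := by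
        rw [eval_Qpoly]
        refine mul_ne_zero ?_ ?_ <;>
        · refine Finset.prod_ne_zero_iff.mpr fun c hc => ?_
          rw [sub_ne_zero]
          exact_mod_cast (ne_of_mem_lineSet hc).symm
      rw [hsingle] at hQ0
      exact hfp ((mul_eq_zero.mp hQ0).resolve_right hne)
    -- Step 2: shrink support and conclude by induction
    have hs' : ∀ k, f k ≠ 0 → (uu k).natAbs + (vv k).natAbs + 1 ≤ 2*N ∧ (uu k - e) % 2 = 0 := by
      intro k hfk
      obtain ⟨h1, h2⟩ := hs k hfk
      have hne : (uu k).natAbs + (vv k).natAbs + 1 ≠ 2*(N+1) := fun h => hfk (hb k h)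
      have hodd : uu k + vv k = 2 * k.1 - 1 := by unfold uu vv; ring
      exact ⟨by omega, h2⟩
    refine ih f e hs' ?_
    intro i j hij
    have hz : ∀ k ∈ Box (N+1), k ∉ Box N → f k * (k.1:ℂ)^i * (k.2:ℂ)^j = 0 := by
      intro k hk hnk
      by_cases hfk : f k = 0
      · rw [hfk, zero_mul, zero_mul]
      · exact absurd (mem_Box.mpr (hs' k hfk).1) hnk
    rw [Finset.sum_subset (Box_mono (N := N)) hz]
    exact hm i j (by omega)

end Stmt3Aux

/-- uniqueness of a 2D filter supported inside `([1−n,n] ∩ ℤ)²` having order `2n`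
sum rules with respect to `M_{√2}` and order `2n` linear-phase moments with phase `(1/2,1/2)`. -/
theorem stmt_3 (n : ℕ) (hn : 1 ≤ n) (a a' : ℤ × ℤ → ℂ)
    (hfa : (Function.support a).Finite) (hfa' : (Function.support a').Finite)
    (hsupp : ∀ k : ℤ × ℤ, a k ≠ 0 →
      1 - (n : ℤ) ≤ k.1 ∧ k.1 ≤ (n : ℤ) ∧ 1 - (n : ℤ) ≤ k.2 ∧ k.2 ≤ (n : ℤ))
    (hsupp' : ∀ k : ℤ × ℤ, a' k ≠ 0 →
      1 - (n : ℤ) ≤ k.1 ∧ k.1 ≤ (n : ℤ) ∧ 1 - (n : ℤ) ≤ k.2 ∧ k.2 ≤ (n : ℤ))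
    (hsr : SumRules2D a (2 * n)) (hsr' : SumRules2D a' (2 * n))
    (hlpm : LPM2D a (2 * n) (1 / 2, 1 / 2)) (hlpm' : LPM2D a' (2 * n) (1 / 2, 1 / 2)) :
    a = a' := by
  classical
  open Stmt3Aux in
  -- conversion of finsums to sums over the box
  have hconv : ∀ (c F : ℤ×ℤ → ℂ),
      (∀ k, c k ≠ 0 → 1 - (n:ℤ) ≤ k.1 ∧ k.1 ≤ n ∧ 1 - (n:ℤ) ≤ k.2 ∧ k.2 ≤ n) →
      (∀ k, F k ≠ 0 → c k ≠ 0) → ∑ᶠ k, F k = ∑ k ∈ Box n, F k := by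
    intro c F hc hF
    refine finsum_eq_sum_of_support_subset F ?_
    intro k hk
    have h := hc k (hF k hk)
    simp only [Box, Finset.coe_Icc, Set.mem_Icc, Prod.le_def]
    exact ⟨⟨h.1, h.2.2.1⟩, h.2.1, h.2.2.2⟩
  -- plain moments of the difference
  have hM : ∀ i j : ℕ, i + j < 2*n →
      ∑ k ∈ Box n, (a k - a' k) * (k.1:ℂ)^i * (k.2:ℂ)^j = 0 := by
    intro i j hij
    have h1 := hlpm (i, j) hij
    have h2 := hlpm' (i, j) hij
    rw [hconv a _ hsupp (fun k hk => by intro h0; apply hk; simp [h0])] at h1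
    rw [hconv a' _ hsupp' (fun k hk => by intro h0; apply hk; simp [h0])] at h2
    calc ∑ k ∈ Box n, (a k - a' k) * (k.1:ℂ)^i * (k.2:ℂ)^j
        = (∑ k ∈ Box n, a k * (k.1:ℂ)^i * (k.2:ℂ)^j)
          - ∑ k ∈ Box n, a' k * (k.1:ℂ)^i * (k.2:ℂ)^j := by
          rw [← Finset.sum_sub_distrib]
          exact Finset.sum_congr rfl fun k _ => by ring
      _ = 0 := by rw [h1, h2, sub_self]
  -- signed moments of the difference
  have hN : ∀ i j : ℕ, i + j < 2*n →
      ∑ k ∈ Box n, (-1:ℂ)^(k.1+k.2) * (a k - a' k) * (k.1:ℂ)^i * (k.2:ℂ)^j = 0 := by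
    intro i j hij
    have h1 := hsr.2 (i, j) hij
    have h2 := hsr'.2 (i, j) hij
    rw [hconv a _ hsupp (fun k hk => by intro h0; apply hk; simp [h0])] at h1
    rw [hconv a' _ hsupp' (fun k hk => by intro h0; apply hk; simp [h0])] at h2
    calc ∑ k ∈ Box n, (-1:ℂ)^(k.1+k.2) * (a k - a' k) * (k.1:ℂ)^i * (k.2:ℂ)^j
        = (∑ k ∈ Box n, (-1:ℂ)^(k.1+k.2) * a k * (k.1:ℂ)^i * (k.2:ℂ)^j)
          - ∑ k ∈ Box n, (-1:ℂ)^(k.1+k.2) * a' k * (k.1:ℂ)^i * (k.2:ℂ)^j := by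
          rw [← Finset.sum_sub_distrib]
          exact Finset.sum_congr rfl fun k _ => by ring
      _ = 0 := by rw [h1, h2, sub_self]
  have heps : ∀ k : ℤ×ℤ, ((-1:ℂ)^(k.1+k.2)) = if Even (k.1+k.2) then 1 else -1 := by
    intro k
    split
    · exact Even.neg_one_zpow ‹_›
    · exact Odd.neg_one_zpow (Int.not_even_iff_odd.mp ‹_›)
  -- parity parts
  set g : ℤ×ℤ → ℂ := fun k => if Even (k.1+k.2) then a k - a' k else 0 with hgdef
  set h : ℤ×ℤ → ℂ := fun k => if Even (k.1+k.2) then 0 else a k - a' k with hhdef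
  have hsplit : ∀ (w : ℤ×ℤ → ℂ) (s : ℂ),
      (∀ k ∈ Box n, w k = ((a k - a' k) + s * ((-1:ℂ)^(k.1+k.2) * (a k - a' k)))/2) →
      ∀ i j : ℕ, i + j < 2*n → ∑ k ∈ Box n, w k * (k.1:ℂ)^i * (k.2:ℂ)^j = 0 := by
    intro w s hw i j hij
    have h1 := hM i j hij
    have h2 := hN i j hij
    calc ∑ k ∈ Box n, w k * (k.1:ℂ)^i * (k.2:ℂ)^j
        = ∑ k ∈ Box n, (((a k - a' k) * (k.1:ℂ)^i * (k.2:ℂ)^j)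
            + s * ((-1:ℂ)^(k.1+k.2) * (a k - a' k) * (k.1:ℂ)^i * (k.2:ℂ)^j))/2 := by
          refine Finset.sum_congr rfl fun k hk => ?_
          rw [hw k hk]; ring
      _ = ((∑ k ∈ Box n, (a k - a' k) * (k.1:ℂ)^i * (k.2:ℂ)^j)
            + s * ∑ k ∈ Box n, (-1:ℂ)^(k.1+k.2) * (a k - a' k) * (k.1:ℂ)^i * (k.2:ℂ)^j)/2 := by
          rw [← Finset.sum_div, Finset.sum_add_distrib, ← Finset.mul_sum]
      _ = 0 := by rw [h1, h2, mul_zero, add_zero, zero_div]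
  have hg : ∀ i j : ℕ, i + j < 2*n → ∑ k ∈ Box n, g k * (k.1:ℂ)^i * (k.2:ℂ)^j = 0 := by
    refine hsplit g 1 ?_
    intro k _
    rw [heps k, hgdef]
    by_cases hev : Even (k.1+k.2) <;> simp [hev] <;> ring
  have hh : ∀ i j : ℕ, i + j < 2*n → ∑ k ∈ Box n, h k * (k.1:ℂ)^i * (k.2:ℂ)^j = 0 := by
    refine hsplit h (-1) ?_
    intro k _
    rw [heps k, hhdef]
    by_cases hev : Even (k.1+k.2) <;> simp [hev] <;> ring
  -- support facts
  have hbsupp : ∀ k : ℤ×ℤ, a k - a' k ≠ 0 →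
      (uu k).natAbs + (vv k).natAbs + 1 ≤ 2*n := by
    intro k hk
    have hbnd : 1 - (n:ℤ) ≤ k.1 ∧ k.1 ≤ n ∧ 1 - (n:ℤ) ≤ k.2 ∧ k.2 ≤ n := by
      by_cases ha : a k = 0
      · refine hsupp' k fun h0 => hk ?_
        rw [ha, h0, sub_zero]
      · exact hsupp k ha
    refine mem_Box.mp ?_
    simp only [Box, Finset.mem_Icc, Prod.le_def]
    exact ⟨⟨hbnd.1, hbnd.2.2.1⟩, hbnd.2.1, hbnd.2.2.2⟩
  have hg0 : g = 0 := by
    refine core n g 1 ?_ hg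
    intro k hk
    have hev : Even (k.1+k.2) := by
      by_contra hev; simp [hgdef, hev] at hk
    have hne : a k - a' k ≠ 0 := by
      intro h0; apply hk; simp [hgdef, h0]
    have hpar : (k.1 + k.2) % 2 = 0 := Int.even_iff.mp hev
    refine ⟨hbsupp k hne, ?_⟩
    simp only [uu]; omega
  have hh0 : h = 0 := by
    refine core n h 0 ?_ hh
    intro k hk
    have hev : ¬ Even (k.1+k.2) := by
      intro hev; simp [hhdef, hev] at hk
    have hne : a k - a' k ≠ 0 := by
      intro h0; apply hk; simp [hhdef, h0]
    have hpar : (k.1 + k.2) % 2 = 1 := Int.not_even_iff.mp hev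
    refine ⟨hbsupp k hne, ?_⟩
    simp only [uu]; omega
  funext k
  rw [← sub_eq_zero]
  by_cases hev : Even (k.1+k.2)
  · have := congrFun hg0 k
    simpa [hgdef, hev] using this
  · have := congrFun hh0 k
    simpa [hhdef, hev] using this
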